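/- arXiv:2401.12984 — 2 statements merged into one kernel-verified Lean document; each statement's English description precedes it below -/
import Mathlib

section
/- Let $n, s, k$ be positive integers with $s \ge 2$, $0 \le k \le n$, $n \ge 5k+6$ and $n \ge 2s+k$. If $s > 2$, then the spectral radius of the graph $K_s \vee ((s+k-1)K_1 \cup K_{n-2s-k+1})$ is strictly less than the spectral radius of the graph $K_2 \vee ((k+1)K_1 \cup K_{n-k-3})$. -/
open Classical in
/-- The adjacency matrix of a simple graph, with real entries. -/
noncomputable def adjMat {V : Type} [Fintype V] (G : SimpleGraph V) : Matrix V V ℝ :=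
  fun i j => if G.Adj i j then 1 else 0

/-- The largest real eigenvalue of a real matrix. -/
noncomputable def maxEig {V : Type} [Fintype V] (M : Matrix V V ℝ) : ℝ :=
  sSup {t : ℝ | ∃ x : V → ℝ, x ≠ 0 ∧ M.mulVec x = t • x}

/-- The spectral radius (largest adjacency eigenvalue) of a graph. -/
noncomputable def specRad {V : Type} [Fintype V] (G : SimpleGraph V) : ℝ :=
  maxEig (adjMat G)

/-- The signless Laplacian matrix `Q(G) = D(G) + A(G)`. -/
noncomputable def qMat {V : Type} [Fintype V] [DecidableEq V] (G : SimpleGraph V) :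
    Matrix V V ℝ :=
  Matrix.diagonal (fun v => ∑ w, adjMat G v w) + adjMat G

/-- The signless Laplacian spectral radius of a graph. -/
noncomputable def qRad {V : Type} [Fintype V] [DecidableEq V] (G : SimpleGraph V) : ℝ :=
  maxEig (qMat G)

/-- The graph `K_s ∨ (a K_1 ∪ K_{n-s-a})` on vertex set `Fin n`:
the first `s` vertices form a clique joined to everything, the next `a` vertices are
independent, and the last `n - s - a` vertices form a clique. -/
def modelA (n s a : ℕ) : SimpleGraph (Fin n) where
  Adj i j := i ≠ j ∧ ((i : ℕ) < s ∨ (j : ℕ) < s ∨ (s + a ≤ (i : ℕ) ∧ s + a ≤ (j : ℕ)))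
  symm := ⟨by rintro i j ⟨h1, h2⟩; exact ⟨h1.symm, by tauto⟩⟩
  loopless := ⟨fun i h => h.1 rfl⟩

/-- The graph `s K_1 ∨ (a K_1 ∪ K_{n-s-a})` on vertex set `Fin n`:
the first `s` vertices are independent but joined to everything else, the next `a`
vertices are independent, and the last `n - s - a` vertices form a clique. -/
def modelB (n s a : ℕ) : SimpleGraph (Fin n) where
  Adj i j := i ≠ j ∧ (((i : ℕ) < s ∧ ¬ (j : ℕ) < s) ∨ ((j : ℕ) < s ∧ ¬ (i : ℕ) < s) ∨
    (s + a ≤ (i : ℕ) ∧ s + a ≤ (j : ℕ)))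
  symm := ⟨by rintro i j ⟨h1, h2⟩; exact ⟨h1.symm, by tauto⟩⟩
  loopless := ⟨fun i h => h.1 rfl⟩

/-- `M` is a matching of `G`: a set of pairwise disjoint edges of `G`. -/
def IsMatchingIn {V : Type} (G : SimpleGraph V) (M : Finset (Sym2 V)) : Prop :=
  (↑M : Set (Sym2 V)) ⊆ G.edgeSet ∧
    ∀ e ∈ M, ∀ f ∈ M, e ≠ f → ∀ v : V, ¬(v ∈ e ∧ v ∈ f)

/-- `H` is an `S(k)`-factor of `G`: a spanning subgraph of `G` each of whose connected
components is isomorphic to a star `K_{1,m}` with `1 ≤ m ≤ k`. -/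
def IsSkFactor {V : Type} [Fintype V] (G H : SimpleGraph V) (k : ℕ) : Prop :=
  H ≤ G ∧ ∀ c : H.ConnectedComponent, ∃ m : ℕ, 1 ≤ m ∧ m ≤ k ∧
    Nonempty ((H.induce c.supp) ≃g completeBipartiteGraph Unit (Fin m))


open Finset

lemma card_lt_aux (n p : ℕ) (h : p ≤ n) :
    ((univ : Finset (Fin n)).filter fun j : Fin n => (j : ℕ) < p).card = p := by
  have : ((univ : Finset (Fin n)).filter fun j : Fin n => (j : ℕ) < p)
      = Finset.map (Fin.castLEEmb h) univ := by
    ext j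
    simp only [mem_filter, mem_univ, true_and, Finset.mem_map, Fin.castLEEmb]
    constructor
    · intro hj; exact ⟨⟨j, hj⟩, by simp [Fin.castLE, Fin.ext_iff]⟩
    · rintro ⟨i, _, rfl⟩; simpa using i.2
  rw [this, Finset.card_map, Finset.card_univ, Fintype.card_fin]

lemma sum_piece (n p q : ℕ) (hpq : p ≤ q) (hq : q ≤ n) (A B C : ℝ) :
    ∑ j : Fin n, (if (j : ℕ) < p then A else if (j : ℕ) < q then B else C)
      = p * A + ((q : ℝ) - p) * B + ((n : ℝ) - q) * C := by
  have key : ∀ j : Fin n,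
      (if (j : ℕ) < p then A else if (j : ℕ) < q then B else C)
        = (if (j : ℕ) < p then A else 0) + (if (j : ℕ) < q then B else 0)
          + (if (j : ℕ) < q then 0 else C) + (if (j : ℕ) < p then -B else 0) := by
    intro j
    by_cases h1 : (j : ℕ) < p <;> by_cases h2 : (j : ℕ) < q <;>
      simp [h1, h2] <;> omega
  rw [Finset.sum_congr rfl (fun j _ => key j)]
  rw [Finset.sum_add_distrib, Finset.sum_add_distrib, Finset.sum_add_distrib]
  rw [← Finset.sum_filter, ← Finset.sum_filter]
  have h3 : ∑ j : Fin n, (if (j : ℕ) < q then (0:ℝ) else C)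
      = ∑ j ∈ (univ.filter fun j : Fin n => ¬ (j:ℕ) < q), C := by
    rw [Finset.sum_filter]; exact Finset.sum_congr rfl (fun j _ => by by_cases h : (j:ℕ) < q <;> simp [h])
  have h4 : ∑ j : Fin n, (if (j : ℕ) < p then (-B) else 0)
      = ∑ j ∈ (univ.filter fun j : Fin n => (j:ℕ) < p), (-B) := by
    rw [← Finset.sum_filter]
  rw [h3, h4, Finset.sum_const, Finset.sum_const, Finset.sum_const, Finset.sum_const]
  rw [card_lt_aux n p (hpq.trans hq), card_lt_aux n q hq, Finset.filter_not,
    Finset.card_sdiff_of_subset (Finset.filter_subset _ _), card_lt_aux n q hq, Finset.card_univ,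
    Fintype.card_fin]
  simp only [nsmul_eq_mul]
  rw [Nat.cast_sub hq]
  ring

lemma adjMat_modelA (n σ α : ℕ) (a b : Fin n) :
    adjMat (modelA n σ α) a b
      = if (a ≠ b ∧ ((a:ℕ) < σ ∨ (b:ℕ) < σ ∨ (σ + α ≤ (a:ℕ) ∧ σ + α ≤ (b:ℕ)))) then 1 else 0 := by
  simp [adjMat, modelA]
  congr

lemma mulVec_piece (n σ α : ℕ) (hn : σ + α ≤ n) (y0 y1 y2 : ℝ) (i : Fin n) :
    (adjMat (modelA n σ α)).mulVec
        (fun j => if (j : ℕ) < σ then y0 else if (j : ℕ) < σ + α then y1 else y2) i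
      = if (i : ℕ) < σ then ((σ:ℝ)-1) * y0 + (α:ℝ) * y1 + ((n:ℝ)-σ-α) * y2
        else if (i : ℕ) < σ + α then (σ:ℝ) * y0
        else (σ:ℝ) * y0 + ((n:ℝ)-σ-α-1) * y2 := by
  classical
  simp only [Matrix.mulVec, dotProduct]
  by_cases hi1 : (i : ℕ) < σ
  · have hterm : ∀ j : Fin n,
        adjMat (modelA n σ α) i j *
            (if (j : ℕ) < σ then y0 else if (j : ℕ) < σ + α then y1 else y2)
          = (if (j : ℕ) < σ then y0 else if (j : ℕ) < σ + α then y1 else y2)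
            - (if j = i then y0 else 0) := by
      intro j
      rw [adjMat_modelA]
      by_cases hji : j = i
      · subst hji; simp [hi1]
      · have : i ≠ j := Ne.symm hji
        simp [this, hi1, hji]
    rw [Finset.sum_congr rfl (fun j _ => hterm j), Finset.sum_sub_distrib,
      sum_piece n σ (σ+α) (Nat.le_add_right _ _) hn, Finset.sum_ite_eq']
    simp only [Finset.mem_univ, if_true, if_pos hi1]
    push_cast
    ring
  · by_cases hi2 : (i : ℕ) < σ + α
    · have hterm : ∀ j : Fin n,
          adjMat (modelA n σ α) i j *
              (if (j : ℕ) < σ then y0 else if (j : ℕ) < σ + α then y1 else y2)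
            = (if (j : ℕ) < σ then y0 else if (j : ℕ) < σ + α then (0:ℝ) else 0) := by
        intro j
        rw [adjMat_modelA]
        by_cases hjσ : (j : ℕ) < σ
        · have hne : i ≠ j := by
            intro h; rw [h] at hi1; exact hi1 hjσ
          rw [if_pos ⟨hne, Or.inr (Or.inl hjσ)⟩, one_mul, if_pos hjσ, if_pos hjσ]
        · have hno : ¬ (i ≠ j ∧ ((i:ℕ) < σ ∨ (j:ℕ) < σ ∨ (σ + α ≤ (i:ℕ) ∧ σ + α ≤ (j:ℕ)))) := by
            rintro ⟨-, h | h | ⟨h, -⟩⟩ <;> omega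
          rw [if_neg hno, zero_mul]
          simp [hjσ]
      rw [Finset.sum_congr rfl (fun j _ => hterm j),
          sum_piece n σ (σ+α) (Nat.le_add_right _ _) hn, if_neg hi1, if_pos hi2]
      ring
    · have hterm : ∀ j : Fin n,
          adjMat (modelA n σ α) i j *
              (if (j : ℕ) < σ then y0 else if (j : ℕ) < σ + α then y1 else y2)
            = (if (j : ℕ) < σ then y0 else if (j : ℕ) < σ + α then (0:ℝ) else y2)
              - (if j = i then y2 else 0) := by
        intro j
        rw [adjMat_modelA]
        by_cases hji : j = i
        · subst hji
          rw [if_neg (by rintro ⟨h, -⟩; exact h rfl)]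
          simp [hi1, hi2]
        · have hne : i ≠ j := Ne.symm hji
          by_cases hjσ : (j : ℕ) < σ
          · rw [if_pos ⟨hne, Or.inr (Or.inl hjσ)⟩, one_mul]
            simp [hjσ, hji]
          · by_cases hjα : (j : ℕ) < σ + α
            · have hno : ¬ (i ≠ j ∧ ((i:ℕ) < σ ∨ (j:ℕ) < σ ∨ (σ + α ≤ (i:ℕ) ∧ σ + α ≤ (j:ℕ)))) := by
                rintro ⟨-, h | h | ⟨-, h⟩⟩ <;> omega
              rw [if_neg hno, zero_mul]
              simp [hjσ, hjα, hji]
            · rw [if_pos ⟨hne, Or.inr (Or.inr ⟨by omega, by omega⟩)⟩, one_mul]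
              simp [hjσ, hjα, hji]
      rw [Finset.sum_congr rfl (fun j _ => hterm j), Finset.sum_sub_distrib,
        sum_piece n σ (σ+α) (Nat.le_add_right _ _) hn, Finset.sum_ite_eq']
      simp only [Finset.mem_univ, if_true, if_neg hi1, if_neg hi2]
      push_cast
      ring

lemma adjMat_diag {n : ℕ} (G : SimpleGraph (Fin n)) (u : Fin n) : adjMat G u u = 0 := by
  simp [adjMat]

lemma adjMat_symm {n : ℕ} (G : SimpleGraph (Fin n)) (u v : Fin n) :
    adjMat G u v = adjMat G v u := by
  classical
  simp only [adjMat]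
  exact if_congr (G.adj_comm u v) rfl rfl

lemma mulVec_apply {n : ℕ} (G : SimpleGraph (Fin n)) (x : Fin n → ℝ) (i : Fin n) :
    (adjMat G).mulVec x i = ∑ j, adjMat G i j * x j := by
  simp [Matrix.mulVec, dotProduct]

lemma same_row {n : ℕ} (G : SimpleGraph (Fin n)) (x : Fin n → ℝ) (t : ℝ)
    (hmv : (adjMat G).mulVec x = t • x) (u u' : Fin n) (hne : u ≠ u')
    (hoff : ∀ j, j ≠ u → j ≠ u' → adjMat G u j = adjMat G u' j) :
    (t + adjMat G u u') * (x u - x u') = 0 := by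
  have e1 : ∑ j, adjMat G u j * x j = t * x u := by
    have h := congrFun hmv u
    rw [mulVec_apply] at h; simpa using h
  have e2 : ∑ j, adjMat G u' j * x j = t * x u' := by
    have h := congrFun hmv u'
    rw [mulVec_apply] at h; simpa using h
  have key : ∀ j : Fin n, adjMat G u j * x j - adjMat G u' j * x j
      = (if j = u then (adjMat G u u - adjMat G u' u) * x u else 0)
        + (if j = u' then (adjMat G u u' - adjMat G u' u') * x u' else 0) := by
    intro j
    by_cases h1 : j = u
    · subst h1
      rw [if_pos rfl, if_neg hne]
      ring
    · by_cases h2 : j = u'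
      · subst h2
        rw [if_neg h1, if_pos rfl]
        ring
      · rw [if_neg h1, if_neg h2, hoff j h1 h2]
        ring
  have hsum : ∑ j, (adjMat G u j * x j - adjMat G u' j * x j)
      = (adjMat G u u - adjMat G u' u) * x u + (adjMat G u u' - adjMat G u' u') * x u' := by
    rw [Finset.sum_congr rfl (fun j _ => key j), Finset.sum_add_distrib]
    simp [Finset.sum_ite_eq']
  rw [Finset.sum_sub_distrib, e1, e2] at hsum
  rw [adjMat_diag, adjMat_diag, adjMat_symm G u' u] at hsum
  linear_combination hsum


lemma project (n σ α : ℕ) (hσ : 1 ≤ σ) (hα : 1 ≤ α) (hlt : σ + α < n)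
    (t : ℝ) (ht : 0 < t) (htc : (n:ℝ) - σ - α - 1 < t)
    (x : Fin n → ℝ) (hx : x ≠ 0)
    (hmv : (adjMat (modelA n σ α)).mulVec x = t • x) :
    (t - ((n:ℝ)-σ-α) + 1) * (t^2 - ((σ:ℝ)-1)*t - σ*α) - σ*((n:ℝ)-σ-α)*t = 0 := by
  set G := modelA n σ α with hG
  have hc1 : ∀ u u' : Fin n, (u:ℕ) < σ → (u':ℕ) < σ → x u = x u' := by
    intro u u' hu hu'
    by_cases h : u = u'
    · rw [h]
    · have hrow := same_row G x t hmv u u' h (fun j hju hju' => by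
        rw [hG, adjMat_modelA, adjMat_modelA,
          if_pos ⟨Ne.symm hju, Or.inl hu⟩, if_pos ⟨Ne.symm hju', Or.inl hu'⟩])
      have hadj : adjMat G u u' = 1 := by
        rw [hG, adjMat_modelA]; exact if_pos ⟨h, Or.inl hu⟩
      rw [hadj] at hrow
      rcases mul_eq_zero.mp hrow with h' | h'
      · linarith
      · exact sub_eq_zero.mp h'
  have hc2 : ∀ u u' : Fin n, σ ≤ (u:ℕ) → (u:ℕ) < σ+α → σ ≤ (u':ℕ) → (u':ℕ) < σ+α →
      x u = x u' := by
    intro u u' hu1 hu2 hu1' hu2'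
    by_cases h : u = u'
    · rw [h]
    · have hrow := same_row G x t hmv u u' h (fun j hju hju' => by
        rw [hG, adjMat_modelA, adjMat_modelA]
        by_cases hjσ : (j:ℕ) < σ
        · rw [if_pos ⟨Ne.symm hju, Or.inr (Or.inl hjσ)⟩,
            if_pos ⟨Ne.symm hju', Or.inr (Or.inl hjσ)⟩]
        · rw [if_neg (by rintro ⟨-, h'|h'|⟨h',-⟩⟩ <;> omega),
            if_neg (by rintro ⟨-, h'|h'|⟨h',-⟩⟩ <;> omega)])
      have hadj : adjMat G u u' = 0 := by
        rw [hG, adjMat_modelA]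
        exact if_neg (by rintro ⟨-, h'|h'|⟨h',-⟩⟩ <;> omega)
      rw [hadj, add_zero] at hrow
      rcases mul_eq_zero.mp hrow with h' | h'
      · exact absurd h' (by linarith)
      · exact sub_eq_zero.mp h'
  have hc3 : ∀ u u' : Fin n, σ+α ≤ (u:ℕ) → σ+α ≤ (u':ℕ) → x u = x u' := by
    intro u u' hu hu'
    by_cases h : u = u'
    · rw [h]
    · have hrow := same_row G x t hmv u u' h (fun j hju hju' => by
        rw [hG, adjMat_modelA, adjMat_modelA]
        by_cases hjσ : (j:ℕ) < σ
        · rw [if_pos ⟨Ne.symm hju, Or.inr (Or.inl hjσ)⟩,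
            if_pos ⟨Ne.symm hju', Or.inr (Or.inl hjσ)⟩]
        · by_cases hjα : (j:ℕ) < σ + α
          · rw [if_neg (by rintro ⟨-, h'|h'|⟨-,h'⟩⟩ <;> omega),
              if_neg (by rintro ⟨-, h'|h'|⟨-,h'⟩⟩ <;> omega)]
          · rw [if_pos ⟨Ne.symm hju, Or.inr (Or.inr ⟨hu, by omega⟩)⟩,
              if_pos ⟨Ne.symm hju', Or.inr (Or.inr ⟨hu', by omega⟩)⟩])
      have hadj : adjMat G u u' = 1 := by
        rw [hG, adjMat_modelA]; exact if_pos ⟨h, Or.inr (Or.inr ⟨hu, hu'⟩)⟩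
      rw [hadj] at hrow
      rcases mul_eq_zero.mp hrow with h' | h'
      · linarith
      · exact sub_eq_zero.mp h'
  have h0n : 0 < n := by omega
  set i0 : Fin n := ⟨0, h0n⟩ with hi0
  set i1 : Fin n := ⟨σ, by omega⟩ with hi1
  set i2 : Fin n := ⟨σ + α, hlt⟩ with hi2
  have hval0 : ((i0 : Fin n) : ℕ) = 0 := rfl
  have hval1 : ((i1 : Fin n) : ℕ) = σ := rfl
  have hval2 : ((i2 : Fin n) : ℕ) = σ + α := rfl
  set y0 := x i0 with hy0d
  set y1 := x i1 with hy1d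
  set y2 := x i2 with hy2d
  have hxeq : x = fun j : Fin n =>
      if (j:ℕ) < σ then y0 else if (j:ℕ) < σ + α then y1 else y2 := by
    funext j
    by_cases hj1 : (j:ℕ) < σ
    · rw [if_pos hj1]; exact hc1 j i0 hj1 hσ
    · by_cases hj2 : (j:ℕ) < σ + α
      · rw [if_neg hj1, if_pos hj2]
        exact hc2 j i1 (by omega) hj2 (by rw [hval1]) (by rw [hval1]; omega)
      · rw [if_neg hj1, if_neg hj2]
        exact hc3 j i2 (by omega) (by rw [hval2])
  rw [hxeq] at hmv
  have hE0 := congrFun hmv i0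
  have hE1 := congrFun hmv i1
  have hE2 := congrFun hmv i2
  rw [mulVec_piece n σ α hlt.le] at hE0 hE1 hE2
  have hv0 : ((i0 : ℕ) < σ) := by rw [hval0]; omega
  have hv1σ : ¬ ((i1 : ℕ) < σ) := by rw [hval1]; omega
  have hv1α : ((i1 : ℕ) < σ + α) := by rw [hval1]; omega
  have hv2σ : ¬ ((i2 : ℕ) < σ) := by rw [hval2]; omega
  have hv2α : ¬ ((i2 : ℕ) < σ + α) := by rw [hval2]; omega
  rw [if_pos hv0] at hE0
  rw [if_neg hv1σ, if_pos hv1α] at hE1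
  rw [if_neg hv2σ, if_neg hv2α] at hE2
  simp only [Pi.smul_apply, smul_eq_mul, if_pos hv0, if_neg hv1σ, if_pos hv1α,
    if_neg hv2σ, if_neg hv2α] at hE0 hE1 hE2
  have hy0 : y0 ≠ 0 := by
    intro h0
    have hy1z : y1 = 0 := by
      rw [h0] at hE1
      have : t * y1 = 0 := by linarith
      rcases mul_eq_zero.mp this with h' | h'
      · exact absurd h' (by linarith)
      · exact h'
    have hy2z : y2 = 0 := by
      rw [h0] at hE2
      have : (t - ((n:ℝ) - σ - α - 1)) * y2 = 0 := by linarith [hE2]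
      rcases mul_eq_zero.mp this with h' | h'
      · exact absurd h' (by linarith)
      · exact h'
    apply hx
    rw [hxeq, h0, hy1z, hy2z]
    funext j
    split_ifs <;> rfl
  have key : ((t - ((n:ℝ)-σ-α) + 1) * (t^2 - ((σ:ℝ)-1)*t - σ*α) - σ*((n:ℝ)-σ-α)*t) * y0
      = 0 := by
    linear_combination (-(t*(t - ((n:ℝ)-σ-α) + 1))) * hE0
      + (-((α:ℝ)*(t - ((n:ℝ)-σ-α) + 1))) * hE1 + (-(((n:ℝ)-σ-α)*t)) * hE2
  rcases mul_eq_zero.mp key with h' | h'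
  · exact h'
  · exact absurd h' hy0

lemma lift (n σ α : ℕ) (hσα : σ + α < n) (hσ : 1 ≤ σ) (t : ℝ) (ht : 0 < t)
    (hp : (t - ((n:ℝ)-σ-α) + 1) * (t^2 - ((σ:ℝ)-1)*t - σ*α) - σ*((n:ℝ)-σ-α)*t = 0) :
    ∃ x : Fin n → ℝ, x ≠ 0 ∧ (adjMat (modelA n σ α)).mulVec x = t • x := by
  refine ⟨fun j => if (j:ℕ) < σ then t*(t-((n:ℝ)-σ-α)+1)
      else if (j:ℕ) < σ+α then (σ:ℝ)*(t-((n:ℝ)-σ-α)+1) else (σ:ℝ)*t, ?_, ?_⟩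
  · intro h
    have h2 := congrFun h ⟨σ+α, hσα⟩
    have hvv : (((⟨σ+α, hσα⟩ : Fin n)) : ℕ) = σ + α := rfl
    have hv : ¬ (((⟨σ+α, hσα⟩ : Fin n) : ℕ) < σ) := by rw [hvv]; omega
    have hv' : ¬ (((⟨σ+α, hσα⟩ : Fin n) : ℕ) < σ+α) := by rw [hvv]; omega
    rw [if_neg hv, if_neg hv'] at h2
    have hσpos : (0:ℝ) < σ := by exact_mod_cast hσ
    have : (σ:ℝ) * t ≠ 0 := ne_of_gt (mul_pos hσpos ht)
    exact this h2
  · funext i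
    rw [mulVec_piece n σ α hσα.le]
    simp only [Pi.smul_apply, smul_eq_mul]
    split_ifs with h1 h2
    · linear_combination (-1 : ℝ) * hp
    · ring
    · ring

lemma eig_le_n (n : ℕ) (G : SimpleGraph (Fin n)) (hn : 1 ≤ n) (t : ℝ)
    (h : ∃ x : Fin n → ℝ, x ≠ 0 ∧ (adjMat G).mulVec x = t • x) : t ≤ n := by
  obtain ⟨x, hx, hmv⟩ := h
  have hS : 0 < ∑ i, x i ^ 2 := by
    have hex : ∃ i, x i ≠ 0 := by
      by_contra hc
      push_neg at hc
      exact hx (funext fun i => hc i)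
    obtain ⟨i, hi⟩ := hex
    exact Finset.sum_pos' (fun j _ => sq_nonneg _) ⟨i, Finset.mem_univ i, by positivity⟩
  have key : t^2 * ∑ i, x i^2 ≤ (n:ℝ)^2 * ∑ i, x i^2 := by
    have hrow : ∀ i : Fin n, ∑ j, (adjMat G i j)^2 ≤ (n:ℝ) := by
      intro i
      calc ∑ j, (adjMat G i j)^2 ≤ ∑ _j : Fin n, (1:ℝ) := by
            refine Finset.sum_le_sum fun j _ => ?_
            simp only [adjMat]
            split_ifs <;> norm_num
        _ = (n:ℝ) := by simp
    calc t^2 * ∑ i, x i ^2 = ∑ i, (t * x i)^2 := by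
          rw [Finset.mul_sum]; exact Finset.sum_congr rfl fun i _ => by ring
      _ = ∑ i, (∑ j, adjMat G i j * x j)^2 := by
          refine Finset.sum_congr rfl fun i _ => ?_
          rw [← mulVec_apply, hmv]
          simp
      _ ≤ ∑ i : Fin n, ((∑ j, (adjMat G i j)^2) * ∑ j, x j^2) :=
          Finset.sum_le_sum fun i _ => Finset.sum_mul_sq_le_sq_mul_sq _ _ _
      _ ≤ ∑ _i : Fin n, ((n:ℝ) * ∑ j, x j^2) :=
          Finset.sum_le_sum fun i _ =>
            mul_le_mul_of_nonneg_right (hrow i) (Finset.sum_nonneg fun j _ => sq_nonneg _)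
      _ = (n:ℝ)^2 * ∑ i, x i^2 := by
          rw [Finset.sum_const, Finset.card_univ, Fintype.card_fin, nsmul_eq_mul]
          ring
  have ht2 : t^2 ≤ (n:ℝ)^2 := le_of_mul_le_mul_right key hS
  have hn1 : (1:ℝ) ≤ n := by exact_mod_cast hn
  nlinarith [sq_nonneg (t - n)]

-- (A) p2 > 0 for x ≥ N
lemma lemA (N K x : ℝ) (hK : 0 ≤ K) (hN : 5*K+6 ≤ N) (hx : N ≤ x) :
    0 < (x - (N-K-3) + 1)*(x^2 - x - 2*(K+1)) - 2*(N-K-3)*x := by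
  nlinarith [sq_nonneg x, sq_nonneg (x-1), mul_nonneg hK (sub_nonneg.mpr hx), sq_nonneg (x-N)]

-- (B) p1 > 0 for x ≥ N
lemma lemB (N S K x : ℝ) (hK : 0 ≤ K) (hS : 3 ≤ S) (hN : 5*K+6 ≤ N) (h2 : 2*S+K ≤ N)
    (hx : N ≤ x) :
    0 < (x - (N-2*S-K+1) + 1)*(x^2 - (S-1)*x - S*(S+K-1)) - S*(N-2*S-K+1)*x := by
  have hxpos : (0:ℝ) < x := by linarith
  have hF : x*((N-2*S-K+1) + 1) ≤ x^2 - (S-1)*x - S*(S+K-1) := by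
    nlinarith [mul_nonneg (by linarith : (0:ℝ) ≤ S+K-1) (by nlinarith : (0:ℝ) ≤ x - S),
      mul_nonneg hxpos.le (by linarith : (0:ℝ) ≤ x - N)]
  have hA : S ≤ x - (N-2*S-K+1) + 1 := by linarith
  have hFpos : (0:ℝ) < x^2 - (S-1)*x - S*(S+K-1) :=
    lt_of_lt_of_le (by nlinarith) hF
  nlinarith [mul_nonneg (sub_nonneg.mpr hA) hFpos.le,
    mul_le_mul_of_nonneg_left hF (by linarith : (0:ℝ) ≤ S),
    mul_pos (by linarith : (0:ℝ) < S) hxpos]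

-- (D) p2 at N-K-2 is negative
lemma lemD (N K : ℝ) (hK : 0 ≤ K) :
    ((N-K-2) - (N-K-3) + 1)*((N-K-2)^2 - (N-K-2) - 2*(K+1)) - 2*(N-K-3)*(N-K-2) < 0 := by
  nlinarith [hK]

-- (C) main: diff > 0 given sum ≥ 10
lemma lemC (N S K x : ℝ) (hK : 0 ≤ K) (hS : 3 ≤ S) (hN : 5*K+6 ≤ N) (h2 : 2*S+K ≤ N)
    (hsum : 10 ≤ N + S + K) (hx : N - K - 2 ≤ x) :
    0 < (S-2)*(x^2 - (S+K)*x) + S*(S+K-1)*(N-2*S-K) - 2*(K+1)*(N-K-4) := by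
  have hXsk : 0 < x - (S+K) := by nlinarith
  have hxpos : 0 < x := by nlinarith
  nlinarith [mul_nonneg (sub_nonneg.mpr hx) hXsk.le, mul_pos hxpos hXsk,
    mul_nonneg (mul_nonneg (by linarith : (0:ℝ) ≤ S-2) (sub_nonneg.mpr hx)) hXsk.le,
    mul_nonneg (mul_nonneg (by linarith : (0:ℝ) ≤ S) (by linarith : (0:ℝ) ≤ S+K-1))
      (by nlinarith : (0:ℝ) ≤ N-2*S-K),
    mul_nonneg (mul_nonneg hK (by linarith : (0:ℝ) ≤ S-3)) (by linarith : (0:ℝ) ≤ N-K-4),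
    mul_nonneg hK (by linarith : (0:ℝ) ≤ N-K-4),
    sq_nonneg (N-K-2-x), mul_nonneg hK (by linarith : (0:ℝ) ≤ S-3)]


lemma lemE (N S K x : ℝ) (hN : N = 6) (hS : S = 3) (hK : K = 0)
    (hx : N - K - 2 ≤ x)
    (hf : (x - (N-2*S-K+1) + 1)*(x^2 - (S-1)*x - S*(S+K-1)) - S*(N-2*S-K+1)*x = 0) :
    (x - (N-K-3) + 1)*(x^2 - x - 2*(K+1)) - 2*(N-K-3)*x < 0 := by
  subst hN hS hK
  have h : x * (x^2 - 2*x - 9) = 0 := by linear_combination hf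
  have hx2 : x^2 = 2*x + 9 := by
    rcases mul_eq_zero.mp h with h' | h'
    · nlinarith
    · nlinarith
  nlinarith [hx2, hx]

/-- Lemma: for `n ≥ max{5k+6, 2s+k}`, `0 ≤ k ≤ n` and `s > 2`,
`ρ(K_s ∨ ((s+k-1)K_1 ∪ K_{n-2s-k+1})) < ρ(K_2 ∨ ((k+1)K_1 ∪ K_{n-k-3}))`. -/
theorem stmt_9 (n s k : ℕ) (hn : 1 ≤ n) (hs : 2 ≤ s) (hkn : k ≤ n)
    (h1 : 5 * k + 6 ≤ n) (h2 : 2 * s + k ≤ n) (hs2 : 2 < s) :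
    specRad (modelA n s (s + k - 1)) < specRad (modelA n 2 (k + 1)) := by
  have hs3 : 3 ≤ s := hs2
  have hKr : (0:ℝ) ≤ (k:ℝ) := Nat.cast_nonneg k
  have hSr : (3:ℝ) ≤ (s:ℝ) := by exact_mod_cast hs3
  have hNr : 5*(k:ℝ)+6 ≤ (n:ℝ) := by exact_mod_cast h1
  have h2r : 2*(s:ℝ)+(k:ℝ) ≤ (n:ℝ) := by exact_mod_cast h2
  have hXr : (4:ℝ) ≤ (n:ℝ)-(k:ℝ)-2 := by linarith
  have hcast1 : ((s + k - 1 : ℕ) : ℝ) = (s:ℝ) + (k:ℝ) - 1 := by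
    have h' : 1 ≤ s + k := by omega
    rw [Nat.cast_sub h']
    push_cast
    ring
  have hcast2 : ((k + 1 : ℕ) : ℝ) = (k:ℝ) + 1 := by push_cast; ring
  have hlt1 : s + (s + k - 1) < n := by omega
  have hlt2 : 2 + (k + 1) < n := by omega
  set T1 := {t : ℝ | ∃ x : Fin n → ℝ, x ≠ 0 ∧
    (adjMat (modelA n s (s+k-1))).mulVec x = t • x} with hT1
  set T2 := {t : ℝ | ∃ x : Fin n → ℝ, x ≠ 0 ∧
    (adjMat (modelA n 2 (k+1))).mulVec x = t • x} with hT2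
  have e1 : specRad (modelA n s (s + k - 1)) = sSup T1 := rfl
  have e2 : specRad (modelA n 2 (k + 1)) = sSup T2 := rfl
  set p1f : ℝ → ℝ := fun x =>
    (x - ((n:ℝ)-2*(s:ℝ)-(k:ℝ)+1) + 1)*(x^2 - ((s:ℝ)-1)*x - (s:ℝ)*((s:ℝ)+(k:ℝ)-1))
      - (s:ℝ)*((n:ℝ)-2*(s:ℝ)-(k:ℝ)+1)*x with hp1f
  set p2f : ℝ → ℝ := fun x =>
    (x - ((n:ℝ)-(k:ℝ)-3) + 1)*(x^2 - x - 2*((k:ℝ)+1)) - 2*((n:ℝ)-(k:ℝ)-3)*x with hp2f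
  have hp1cont : Continuous p1f := by rw [hp1f]; fun_prop
  have hp2cont : Continuous p2f := by rw [hp2f]; fun_prop
  -- every eigenvalue of G1 above n-k-2 is a root of p1f
  have hproj : ∀ t : ℝ, (n:ℝ)-(k:ℝ)-2 < t → t ∈ T1 → p1f t = 0 := by
    rintro t htX ⟨x, hx, hmv⟩
    have ht : 0 < t := by linarith
    have htc : (n:ℝ) - (s:ℝ) - ((s + k - 1 : ℕ):ℝ) - 1 < t := by
      rw [hcast1]; linarith
    have hres := project n s (s+k-1) (by omega) (by omega) hlt1 t ht htc x hx hmv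
    rw [hcast1] at hres
    rw [hp1f]
    linear_combination hres
  -- the set of large roots of p1f
  set R := {x : ℝ | (n:ℝ)-(k:ℝ)-2 ≤ x ∧ p1f x = 0} with hR
  have hRclosed : IsClosed R := by
    rw [hR]
    exact (isClosed_le continuous_const continuous_id).inter
      (isClosed_eq hp1cont continuous_const)
  have hRle : ∀ x ∈ R, x ≤ (n:ℝ) := by
    rintro x ⟨hx1, hx2⟩
    by_contra hc
    push_neg at hc
    have := lemB (n:ℝ) (s:ℝ) (k:ℝ) x hKr hSr hNr h2r hc.le
    rw [hp1f] at hx2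
    simp only at hx2
    linarith
  have hRbdd : BddAbove R := ⟨(n:ℝ), fun x hx => hRle x hx⟩
  -- p1f - p2f identity and p2f negativity at large roots of p1f
  have hmain : ∀ x : ℝ, (n:ℝ)-(k:ℝ)-2 ≤ x → p1f x = 0 → p2f x < 0 := by
    intro x hx hf
    rw [hp1f] at hf
    simp only at hf
    rw [hp2f]
    simp only
    by_cases hcor : 10 ≤ n + s + k
    · have hcorr : (10:ℝ) ≤ (n:ℝ) + (s:ℝ) + (k:ℝ) := by exact_mod_cast hcor
      have hdiffpos := lemC (n:ℝ) (s:ℝ) (k:ℝ) x hKr hSr hNr h2r hcorr hx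
      nlinarith [hdiffpos, hf]
    · exact lemE (n:ℝ) (s:ℝ) (k:ℝ) x (by exact_mod_cast (by omega : n = 6))
        (by exact_mod_cast (by omega : s = 3)) (by exact_mod_cast (by omega : k = 0)) hx hf
  -- choose θ : an upper bound for T1 with p2f θ < 0 and θ < n
  have hθ : ∃ θ : ℝ, (n:ℝ)-(k:ℝ)-2 ≤ θ ∧ θ < (n:ℝ) ∧ p2f θ < 0 ∧ ∀ t ∈ T1, t ≤ θ := by
    by_cases hRne : R.Nonempty
    · refine ⟨sSup R, ?_, ?_, ?_, ?_⟩
      · exact (hRclosed.csSup_mem hRne hRbdd).1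
      · have hle : sSup R ≤ (n:ℝ) := csSup_le hRne hRle
        rcases lt_or_eq_of_le hle with h' | h'
        · exact h'
        · exfalso
          have hmem := hRclosed.csSup_mem hRne hRbdd
          have := lemB (n:ℝ) (s:ℝ) (k:ℝ) (sSup R) hKr hSr hNr h2r h'.ge
          have hmem2 : p1f (sSup R) = 0 := hmem.2
          rw [hp1f] at hmem2
          simp only at hmem2
          linarith
      · exact hmain _ (hRclosed.csSup_mem hRne hRbdd).1 (hRclosed.csSup_mem hRne hRbdd).2
      · intro t htT
        by_cases hle : t ≤ (n:ℝ)-(k:ℝ)-2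
        · exact hle.trans (hRclosed.csSup_mem hRne hRbdd).1
        · push_neg at hle
          exact le_csSup hRbdd ⟨hle.le, hproj t hle htT⟩
    · refine ⟨(n:ℝ)-(k:ℝ)-2, le_refl _, by linarith, ?_, ?_⟩
      · rw [hp2f]
        simp only
        exact lemD (n:ℝ) (k:ℝ) hKr
      · intro t htT
        by_contra hc
        push_neg at hc
        exact hRne ⟨t, hc.le, hproj t hc htT⟩
  obtain ⟨θ, hθX, hθN, hθp2, hθub⟩ := hθ
  -- find a root t2 of p2f in (θ, n]
  have hp2n : 0 < p2f (n:ℝ) := by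
    rw [hp2f]
    exact lemA (n:ℝ) (k:ℝ) (n:ℝ) hKr hNr (le_refl _)
  have hIVT := intermediate_value_Ioc hθN.le (hp2cont.continuousOn (s := Set.Icc θ (n:ℝ)))
  have h0mem : (0:ℝ) ∈ Set.Ioc (p2f θ) (p2f (n:ℝ)) := ⟨hθp2, hp2n.le⟩
  obtain ⟨t2, ht2mem, ht2root⟩ := hIVT h0mem
  -- t2 is an eigenvalue of G2
  have ht2pos : 0 < t2 := by
    have := ht2mem.1
    linarith
  have hp2cast : (t2 - ((n:ℝ) - ((2:ℕ):ℝ) - ((k+1 : ℕ):ℝ)) + 1)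
      * (t2^2 - (((2:ℕ):ℝ)-1)*t2 - ((2:ℕ):ℝ)*((k+1 : ℕ):ℝ))
      - ((2:ℕ):ℝ)*((n:ℝ) - ((2:ℕ):ℝ) - ((k+1 : ℕ):ℝ))*t2 = 0 := by
    rw [hp2f] at ht2root
    simp only at ht2root
    push_cast
    linear_combination ht2root
  have ht2T2 : t2 ∈ T2 := by
    rw [hT2]
    exact lift n 2 (k+1) hlt2 (by omega) t2 ht2pos hp2cast
  -- conclude
  rw [e1, e2]
  have hub2 : BddAbove T2 := ⟨(n:ℝ), fun t ht => eig_le_n n _ hn t ht⟩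
  calc sSup T1 ≤ θ := Real.sSup_le hθub (by linarith)
    _ < t2 := ht2mem.1
    _ ≤ sSup T2 := le_csSup hub2 ht2T2
end

section
/- Let $n, s, k$ be positive integers with $s \ge 2$, $0 \le k \le n$, $n \ge 5k+7$ and $n \ge 2s+k$. If $s > 2$, then the signless Laplacian spectral radius of the graph $K_s \vee ((s+k-1)K_1 \cup K_{n-2s-k+1})$ is strictly less than the signless Laplacian spectral radius of the graph $K_2 \vee ((k+1)K_1 \cup K_{n-k-3})$. -/
section St10Aux
open Finset

lemma eig_le {n : ℕ} {M : Matrix (Fin n) (Fin n) ℝ} (hM : ∀ i j, 0 ≤ M i j)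
    {y : Fin n → ℝ} (hy : ∀ i, 0 < y i) {c t : ℝ}
    (hc : ∀ i, M.mulVec y i ≤ c * y i)
    (ht : ∃ x, x ≠ 0 ∧ M.mulVec x = t • x) : t ≤ c := by
  obtain ⟨x, hx0, hxe⟩ := ht
  obtain ⟨j, hj⟩ : ∃ j, x j ≠ 0 := by
    by_contra h; push_neg at h; exact hx0 (funext h)
  obtain ⟨i0, -, hi0⟩ := Finset.exists_max_image Finset.univ (fun i => |x i| / y i)
    ⟨j, Finset.mem_univ j⟩
  have hrat : 0 < |x i0| / y i0 :=
    lt_of_lt_of_le (div_pos (abs_pos.2 hj) (hy j)) (hi0 j (Finset.mem_univ j))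
  have hxi0 : 0 < |x i0| := by
    by_contra h
    push_neg at h
    have : |x i0| = 0 := le_antisymm h (abs_nonneg _)
    rw [this, zero_div] at hrat
    exact lt_irrefl 0 hrat
  have e1 : M.mulVec x i0 = t * x i0 := by rw [hxe]; simp
  have key : |t| * |x i0| ≤ c * |x i0| := by
    have c1 : |t| * |x i0| = |M.mulVec x i0| := by rw [e1, abs_mul]
    have c2 : |M.mulVec x i0| ≤ ∑ w, M i0 w * |x w| := by
      rw [Matrix.mulVec, dotProduct]
      refine (Finset.abs_sum_le_sum_abs _ _).trans (le_of_eq ?_)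
      exact Finset.sum_congr rfl fun w _ => by rw [abs_mul, abs_of_nonneg (hM i0 w)]
    have c3 : ∑ w, M i0 w * |x w| ≤ ∑ w, M i0 w * (|x i0| / y i0 * y w) := by
      refine Finset.sum_le_sum fun w _ => mul_le_mul_of_nonneg_left ?_ (hM i0 w)
      have h1 := hi0 w (Finset.mem_univ w)
      rw [div_le_div_iff₀ (hy w) (hy i0)] at h1
      rw [div_mul_eq_mul_div, le_div_iff₀ (hy i0)]
      exact h1
    have c4 : ∑ w, M i0 w * (|x i0| / y i0 * y w) = |x i0| / y i0 * M.mulVec y i0 := by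
      rw [Matrix.mulVec, dotProduct, Finset.mul_sum]
      exact Finset.sum_congr rfl fun w _ => by ring
    have c5 : |x i0| / y i0 * M.mulVec y i0 ≤ |x i0| / y i0 * (c * y i0) :=
      mul_le_mul_of_nonneg_left (hc i0) hrat.le
    have c6 : |x i0| / y i0 * (c * y i0) = c * |x i0| := by
      rw [div_mul_eq_mul_div, mul_div_assoc, mul_div_assoc,
        div_self (hy i0).ne', mul_one]
      ring
    linarith [c1.le, c2, c3, c4.le, c5, c6.le]
  calc t ≤ |t| := le_abs_self t
    _ ≤ c := le_of_mul_le_mul_right key hxi0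

lemma adjMat_nonneg {V : Type} [Fintype V] (G : SimpleGraph V) (i j : V) : 0 ≤ adjMat G i j := by
  unfold adjMat; split <;> norm_num

lemma adjMat_le_one {V : Type} [Fintype V] (G : SimpleGraph V) (i j : V) : adjMat G i j ≤ 1 := by
  unfold adjMat; split <;> norm_num

lemma qMat_nonneg {n : ℕ} (G : SimpleGraph (Fin n)) (i j : Fin n) : 0 ≤ qMat G i j := by
  unfold qMat
  rw [Matrix.add_apply]
  refine add_nonneg ?_ (adjMat_nonneg G i j)
  rcases eq_or_ne i j with h | h
  · subst h
    rw [Matrix.diagonal_apply_eq]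
    exact Finset.sum_nonneg fun w _ => adjMat_nonneg G i w
  · rw [Matrix.diagonal_apply_ne _ h]

lemma qMat_ones {n : ℕ} (G : SimpleGraph (Fin n)) (i : Fin n) :
    (qMat G).mulVec (fun _ => 1) i ≤ (2 * n : ℝ) * 1 := by
  have : (qMat G).mulVec (fun _ => 1) i = ∑ j, qMat G i j := by
    rw [Matrix.mulVec, dotProduct]; simp
  rw [this, mul_one]
  have hd : ∑ j, qMat G i j = (∑ w, adjMat G i w) + ∑ j, adjMat G i j := by
    unfold qMat
    rw [Finset.sum_congr rfl fun j (_ : j ∈ Finset.univ) => Matrix.add_apply _ _ _ _,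
      Finset.sum_add_distrib]
    congr 1
    rw [Finset.sum_eq_single i]
    · exact Matrix.diagonal_apply_eq _ i
    · exact fun b _ hb => Matrix.diagonal_apply_ne' _ hb
    · intro h; exact absurd (Finset.mem_univ i) h
  have hb : ∑ w, adjMat G i w ≤ (n : ℝ) := by
    calc ∑ w, adjMat G i w ≤ ∑ _w : Fin n, (1:ℝ) := Finset.sum_le_sum fun w _ => adjMat_le_one G i w
      _ = n := by simp
  rw [hd]; linarith

/-- every eigenvalue of `qMat G` is at most `2n`. -/
lemma eig_qMat_le {n : ℕ} (G : SimpleGraph (Fin n)) {t : ℝ}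
    (ht : ∃ x : Fin n → ℝ, x ≠ 0 ∧ (qMat G).mulVec x = t • x) : t ≤ 2 * n :=
  eig_le (qMat_nonneg G) (fun _ => one_pos) (fun i => qMat_ones G i) ht

lemma qRad_le {n : ℕ} (G : SimpleGraph (Fin n)) {y : Fin n → ℝ} (hy : ∀ i, 0 < y i) {c : ℝ}
    (hc0 : 0 ≤ c) (hc : ∀ i, (qMat G).mulVec y i ≤ c * y i) : qRad G ≤ c :=
  Real.sSup_le (fun _ ht => eig_le (qMat_nonneg G) hy hc ht) hc0

lemma qMat_symm {n : ℕ} (G : SimpleGraph (Fin n)) : (qMat G).IsHermitian := by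
  show Matrix.conjTranspose (qMat G) = qMat G
  ext i j
  simp only [Matrix.conjTranspose_apply, star_trivial]
  unfold qMat
  rcases eq_or_ne i j with h | h
  · subst h; rfl
  · rw [Matrix.add_apply, Matrix.add_apply, Matrix.diagonal_apply_ne _ h,
      Matrix.diagonal_apply_ne' _ h]
    simp only [zero_add]
    unfold adjMat
    by_cases hadj : G.Adj i j
    · rw [if_pos hadj, if_pos hadj.symm]
    · rw [if_neg hadj, if_neg fun h' => hadj h'.symm]

lemma rayleigh_le_qRad {n : ℕ} (G : SimpleGraph (Fin n)) (x : Fin n → ℝ) (hx : x ≠ 0)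
    (bdd : BddAbove {t : ℝ | ∃ z : Fin n → ℝ, z ≠ 0 ∧ (qMat G).mulVec z = t • z}) :
    (∑ i, (qMat G).mulVec x i * x i) / (∑ i, x i * x i) ≤ qRad G := by
  classical
  set M := qMat G with hM
  set T := Matrix.toEuclideanLin M with hT
  have hsymm : T.IsSymmetric := Matrix.isHermitian_iff_isSymmetric.mp (qMat_symm G)
  set xE : EuclideanSpace ℝ (Fin n) := (WithLp.equiv 2 (Fin n → ℝ)).symm x with hxE
  have hxE0 : xE ≠ 0 := by
    intro h
    apply hx
    have := congrArg (WithLp.equiv 2 (Fin n → ℝ)) h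
    simpa [hxE] using this
  haveI : Nontrivial (EuclideanSpace ℝ (Fin n)) := ⟨⟨0, xE, fun h => hxE0 h.symm⟩⟩
  have hev := hsymm.hasEigenvalue_iSup_of_finiteDimensional
  set μ : ℝ := ⨆ z : {z : EuclideanSpace ℝ (Fin n) // z ≠ 0},
      RCLike.re (inner ℝ (T z) (z : EuclideanSpace ℝ (Fin n)) : ℝ) /
        ‖(z : EuclideanSpace ℝ (Fin n))‖ ^ 2 with hμ
  obtain ⟨v, hv⟩ := hev.exists_hasEigenvector
  have hveq : T v = μ • v := hv.apply_eq_smul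
  have hmem : μ ∈ {t : ℝ | ∃ z : Fin n → ℝ, z ≠ 0 ∧ M.mulVec z = t • z} := by
    refine ⟨WithLp.equiv 2 (Fin n → ℝ) v, ?_, ?_⟩
    · intro h
      apply hv.right
      have := congrArg (WithLp.equiv 2 (Fin n → ℝ)).symm h
      simpa using this
    · have := congrArg (WithLp.equiv 2 (Fin n → ℝ)) hveq
      rw [hT, WithLp.equiv_apply, Matrix.piLp_ofLp_toEuclideanLin, Matrix.toLin'_apply] at this
      simpa using this
  -- bound the rayleigh quotient of x by μ
  have hbddR : BddAbove (Set.range fun z : {z : EuclideanSpace ℝ (Fin n) // z ≠ 0} =>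
      RCLike.re (inner ℝ (T z) (z : EuclideanSpace ℝ (Fin n)) : ℝ) /
        ‖(z : EuclideanSpace ℝ (Fin n))‖ ^ 2) := by
    set T' := LinearMap.toContinuousLinearMap T with hT'
    refine ⟨‖T'‖, ?_⟩
    rintro r ⟨z, rfl⟩
    have hz : (0:ℝ) < ‖(z : EuclideanSpace ℝ (Fin n))‖ := norm_pos_iff.mpr z.prop
    have h1 : (inner ℝ (T z) (z : EuclideanSpace ℝ (Fin n)) : ℝ) ≤
        ‖T (z : EuclideanSpace ℝ (Fin n))‖ * ‖(z : EuclideanSpace ℝ (Fin n))‖ :=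
      real_inner_le_norm _ _
    have h2 : ‖T (z : EuclideanSpace ℝ (Fin n))‖ ≤ ‖T'‖ * ‖(z : EuclideanSpace ℝ (Fin n))‖ :=
      T'.le_opNorm _
    simp only [RCLike.re_to_real]
    rw [div_le_iff₀ (by positivity)]
    nlinarith [norm_nonneg (T (z : EuclideanSpace ℝ (Fin n)))]
  have hTx : T xE = (WithLp.equiv 2 (Fin n → ℝ)).symm (M.mulVec x) := by
    rw [hT, Matrix.toEuclideanLin_apply, hxE]; rfl
  have hnum : (inner ℝ (T xE) xE : ℝ) = ∑ i, M.mulVec x i * x i := by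
    rw [PiLp.inner_apply, hTx]
    simp [hxE, WithLp.equiv_symm_apply, mul_comm]
  have hden : ‖xE‖ ^ 2 = ∑ i, x i * x i := by
    rw [← real_inner_self_eq_norm_sq, PiLp.inner_apply]
    simp [hxE, WithLp.equiv_symm_apply, pow_two]
  have hray : (∑ i, M.mulVec x i * x i) / (∑ i, x i * x i) =
      RCLike.re (inner ℝ (T xE) xE : ℝ) / ‖xE‖ ^ 2 := by
    rw [hnum, hden]
    simp
  have hle : RCLike.re (inner ℝ (T xE) xE : ℝ) / ‖xE‖ ^ 2 ≤ μ := by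
    rw [hμ]
    exact le_ciSup hbddR ⟨xE, hxE0⟩
  have : μ ≤ qRad G := le_csSup bdd hmem
  rw [hray]
  linarith

noncomputable def pw (n s a : ℕ) (c1 c2 c3 : ℝ) : Fin n → ℝ :=
  fun i => if (i : ℕ) < s then c1 else if (i : ℕ) < s + a then c2 else c3

lemma pw_eval {n s a : ℕ} (c1 c2 c3 : ℝ) (v : Fin n) :
    pw n s a c1 c2 c3 v = if (v : ℕ) < s then c1 else if (v : ℕ) < s + a then c2 else c3 := rfl

lemma sum_pw {n s a t : ℕ} (h : s + a + t = n) (c1 c2 c3 : ℝ) :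
    ∑ i : Fin n, pw n s a c1 c2 c3 i = s * c1 + a * c2 + t * c3 := by
  have h0 : ∑ i : Fin n, pw n s a c1 c2 c3 i
      = ∑ m ∈ Finset.range n, (if m < s then c1 else if m < s + a then c2 else c3) :=
    Fin.sum_univ_eq_sum_range (fun m => if m < s then c1 else if m < s + a then c2 else c3) n
  have h1 : ∑ m ∈ Finset.range (s+a), (if m < s then c1 else if m < s + a then c2 else c3)
      + ∑ m ∈ Finset.Ico (s+a) n, (if m < s then c1 else if m < s + a then c2 else c3)
      = ∑ m ∈ Finset.range n, (if m < s then c1 else if m < s + a then c2 else c3) :=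
    Finset.sum_range_add_sum_Ico _ (by omega)
  have h2 : ∑ m ∈ Finset.range s, (if m < s then c1 else if m < s + a then c2 else c3)
      + ∑ m ∈ Finset.Ico s (s+a), (if m < s then c1 else if m < s + a then c2 else c3)
      = ∑ m ∈ Finset.range (s+a), (if m < s then c1 else if m < s + a then c2 else c3) :=
    Finset.sum_range_add_sum_Ico _ (by omega)
  have e1 : ∑ m ∈ Finset.range s, (if m < s then c1 else if m < s + a then c2 else c3)
      = s * c1 := by
    have hc : ∀ m ∈ Finset.range s, (if m < s then c1 else if m < s + a then c2 else c3) = c1 :=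
      fun m hm => by rw [Finset.mem_range] at hm; rw [if_pos hm]
    rw [Finset.sum_congr rfl hc]
    simp [Finset.sum_const]
  have e2 : ∑ m ∈ Finset.Ico s (s+a), (if m < s then c1 else if m < s + a then c2 else c3)
      = a * c2 := by
    have hc : ∀ m ∈ Finset.Ico s (s+a),
        (if m < s then c1 else if m < s + a then c2 else c3) = c2 := fun m hm => by
      rw [Finset.mem_Ico] at hm; rw [if_neg (by omega), if_pos (by omega)]
    rw [Finset.sum_congr rfl hc]
    simp [Finset.sum_const, Nat.card_Ico]
  have e3 : ∑ m ∈ Finset.Ico (s+a) n, (if m < s then c1 else if m < s + a then c2 else c3)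
      = t * c3 := by
    have hc : ∀ m ∈ Finset.Ico (s+a) n,
        (if m < s then c1 else if m < s + a then c2 else c3) = c3 := fun m hm => by
      rw [Finset.mem_Ico] at hm; rw [if_neg (by omega), if_neg (by omega)]
    rw [Finset.sum_congr rfl hc]
    simp only [Finset.sum_const, Nat.card_Ico, nsmul_eq_mul]
    have : n - (s + a) = t := by omega
    rw [this]
  rw [h0, ← h1, ← h2, e1, e2, e3]

lemma adj_row_mul {n s a t : ℕ} (h : s + a + t = n) (c1 c2 c3 : ℝ) (v : Fin n) :
    ∑ w, adjMat (modelA n s a) v w * pw n s a c1 c2 c3 w =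
      if (v : ℕ) < s then ((s:ℝ) * c1 + a * c2 + t * c3 - c1)
      else if (v : ℕ) < s + a then (s:ℝ) * c1
      else ((s:ℝ) * c1 + t * c3 - c3) := by
  by_cases hv1 : (v : ℕ) < s
  · rw [if_pos hv1]
    have hterm : ∀ w : Fin n, adjMat (modelA n s a) v w * pw n s a c1 c2 c3 w
        = pw n s a c1 c2 c3 w - (if w = v then c1 else 0) := by
      intro w
      unfold adjMat
      by_cases hw : w = v
      · subst hw
        rw [if_neg (SimpleGraph.irrefl _), if_pos rfl, zero_mul, pw_eval, if_pos hv1]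
        ring
      · have hadj : (modelA n s a).Adj v w := ⟨fun hh => hw hh.symm, Or.inl hv1⟩
        rw [if_pos hadj, if_neg hw, one_mul, sub_zero]
    rw [Finset.sum_congr rfl (fun w _ => hterm w), Finset.sum_sub_distrib, sum_pw h,
      Finset.sum_ite_eq' Finset.univ v (fun _ => c1), if_pos (Finset.mem_univ v)]
  · by_cases hv2 : (v : ℕ) < s + a
    · rw [if_neg hv1, if_pos hv2]
      have hterm : ∀ w : Fin n, adjMat (modelA n s a) v w * pw n s a c1 c2 c3 w
          = pw n s a c1 0 0 w := by
        intro w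
        unfold adjMat
        by_cases hw : (w : ℕ) < s
        · have hadj : (modelA n s a).Adj v w :=
            ⟨fun hh => hv1 (hh ▸ hw), Or.inr (Or.inl hw)⟩
          rw [if_pos hadj, one_mul, pw_eval, pw_eval, if_pos hw, if_pos hw]
        · have hnadj : ¬ (modelA n s a).Adj v w := by
            rintro ⟨-, hc | hc | ⟨hc, -⟩⟩ <;> omega
          rw [if_neg hnadj, zero_mul, pw_eval, if_neg hw]
          split <;> rfl
      rw [Finset.sum_congr rfl (fun w _ => hterm w), sum_pw h]
      ring
    · rw [if_neg hv1, if_neg hv2]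
      have hv3 : s + a ≤ (v : ℕ) := by omega
      have hterm : ∀ w : Fin n, adjMat (modelA n s a) v w * pw n s a c1 c2 c3 w
          = pw n s a c1 0 c3 w - (if w = v then c3 else 0) := by
        intro w
        unfold adjMat
        by_cases hw : w = v
        · subst hw
          rw [if_neg (SimpleGraph.irrefl _), if_pos rfl, zero_mul, pw_eval,
            if_neg hv1, if_neg hv2]
          ring
        · by_cases hw1 : (w : ℕ) < s
          · have hadj : (modelA n s a).Adj v w :=
              ⟨fun hh => hw hh.symm, Or.inr (Or.inl hw1)⟩
            rw [if_pos hadj, if_neg hw, one_mul, pw_eval, pw_eval, if_pos hw1, if_pos hw1,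
              sub_zero]
          · by_cases hw2 : (w : ℕ) < s + a
            · have hnadj : ¬ (modelA n s a).Adj v w := by
                rintro ⟨-, hc | hc | ⟨-, hc⟩⟩ <;> omega
              rw [if_neg hnadj, zero_mul, if_neg hw, pw_eval, if_neg hw1, if_pos hw2, sub_zero]
            · have hadj : (modelA n s a).Adj v w :=
                ⟨fun hh => hw hh.symm, Or.inr (Or.inr ⟨hv3, by omega⟩)⟩
              rw [if_pos hadj, if_neg hw, one_mul, pw_eval, pw_eval, if_neg hw1, if_neg hw2,
                if_neg hw1, if_neg hw2, sub_zero]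
      rw [Finset.sum_congr rfl (fun w _ => hterm w), Finset.sum_sub_distrib, sum_pw h,
        Finset.sum_ite_eq' Finset.univ v (fun _ => c3), if_pos (Finset.mem_univ v)]
      ring

lemma mulVec_qMat_modelA {n s a t : ℕ} (h : s + a + t = n) (c1 c2 c3 : ℝ) (v : Fin n) :
    (qMat (modelA n s a)).mulVec (pw n s a c1 c2 c3) v =
      if (v : ℕ) < s then ((n:ℝ) - 1) * c1 + ((s:ℝ) * c1 + a * c2 + t * c3 - c1)
      else if (v : ℕ) < s + a then (s:ℝ) * c2 + (s:ℝ) * c1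
      else ((s:ℝ) + t - 1) * c3 + ((s:ℝ) * c1 + t * c3 - c3) := by
  have hdeg : (∑ w, adjMat (modelA n s a) v w)
      = if (v : ℕ) < s then ((n:ℝ) - 1)
        else if (v : ℕ) < s + a then (s:ℝ)
        else ((s:ℝ) + t - 1) := by
    have h1 : (∑ w, adjMat (modelA n s a) v w)
        = ∑ w, adjMat (modelA n s a) v w * pw n s a 1 1 1 w := by
      refine Finset.sum_congr rfl fun w _ => ?_
      simp only [pw_eval, ite_self, mul_one]
    have hcast : (s:ℝ) + a + t = n := by exact_mod_cast congrArg (Nat.cast : ℕ → ℝ) h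
    rw [h1, adj_row_mul h 1 1 1 v]
    split
    · linarith
    · split
      · ring
      · ring
  have hq : (qMat (modelA n s a)).mulVec (pw n s a c1 c2 c3) v
      = (∑ w, adjMat (modelA n s a) v w) * pw n s a c1 c2 c3 v
        + ∑ w, adjMat (modelA n s a) v w * pw n s a c1 c2 c3 w := by
    unfold qMat
    rw [Matrix.add_mulVec, Pi.add_apply, Matrix.mulVec_diagonal]
    congr 1
  rw [hq, hdeg, adj_row_mul h c1 c2 c3 v, pw_eval]
  by_cases hv1 : (v : ℕ) < s
  · simp only [if_pos hv1]
  · by_cases hv2 : (v : ℕ) < s + a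
    · simp only [if_neg hv1, if_pos hv2]
    · simp only [if_neg hv1, if_neg hv2]

lemma st10_cert1 (N S K : ℝ) (hK : 0 ≤ K) (hS : 3 ≤ S) (h1 : 5*K+7 ≤ N) (h2 : 2*S+K+1 ≤ N) :
    0 < (2*N-2*K-4)*(3*S-4)*(2*N-2*K-4-S)*(N-K-1) + (K+1)*(3*S-4)*(2*N-2*K-4-S)
    - (N+S-2)*(3*S-4)*(2*N-2*K-4-S)*(N-K-1) - (S+K-1)*(3*S-4)*S*(N-K-1)
    - (N-2*S-K+1)*S*(2*N-2*K-4-S)*(N-K-1) := by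
  have hu : (0:ℝ) ≤ S-3 := by linarith
  have hd : (0:ℝ) ≤ N-2*S-K-1 := by linarith
  have hm : (0:ℝ) ≤ N-5*K-7 := by linarith
  have hd0 : (0:ℝ) ≤ N-2*S-K := by linarith
  nlinarith [mul_nonneg hm hu, mul_nonneg hm (mul_nonneg hu hu),
    mul_nonneg hm (mul_nonneg (mul_nonneg hu hu) hu),
    mul_nonneg hm hd0, mul_nonneg hm (mul_nonneg hd0 hd0),
    mul_nonneg hm (mul_nonneg hu hd0), mul_nonneg hm (mul_nonneg (mul_nonneg hu hu) hd0),
    mul_nonneg hm (mul_nonneg hu (mul_nonneg hd0 hd0)),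
    mul_nonneg hd hu, mul_nonneg hd (mul_nonneg hu hu),
    mul_nonneg hd (mul_nonneg (mul_nonneg hu hu) hu), hd, hm, hu]

lemma st10_cert2 (S K : ℝ) (hK : 0 ≤ K) (hE : 2*K+4 ≤ S) :
    0 < (2*(2*S+K)-2*K-4)*(3*S-4)*(2*(2*S+K)-2*K-4-S)*((2*S+K)-K-1)
    + (K+1)*(3*S-4)*(2*(2*S+K)-2*K-4-S)
    - ((2*S+K)+S-2)*(3*S-4)*(2*(2*S+K)-2*K-4-S)*((2*S+K)-K-1)
    - (S+K-1)*(3*S-4)*S*((2*S+K)-K-1)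
    - ((2*S+K)-2*S-K+1)*S*(2*(2*S+K)-2*K-4-S)*((2*S+K)-K-1) := by
  have he : (0:ℝ) ≤ S-2*K-4 := by linarith
  nlinarith [mul_nonneg hK he, mul_nonneg hK (mul_nonneg he he),
    mul_nonneg hK (mul_nonneg he (mul_nonneg he he)),
    mul_nonneg (mul_nonneg hK hK) he, mul_nonneg (mul_nonneg hK hK) (mul_nonneg he he),
    mul_nonneg (mul_nonneg (mul_nonneg hK hK) hK) he,
    mul_nonneg hK hK, mul_nonneg hK (mul_nonneg hK hK),
    mul_nonneg he he, mul_nonneg he (mul_nonneg he he),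
    mul_nonneg (mul_nonneg he he) (mul_nonneg he he), hK, he]

end St10Aux


lemma st10_hcomp (n s k tA : ℕ) (hs3 : 3 ≤ s) (h1 : 5 * k + 7 ≤ n) (h2 : 2 * s + k ≤ n)
    (hA : s + (s + k - 1) + tA = n) :
    ∀ v, (qMat (modelA n s (s + k - 1))).mulVec
      (pw n s (s + k - 1) ((3*(s:ℝ) - 4)*(2*(n:ℝ) - 2*(k:ℝ) - 4 - (s:ℝ)))
        ((3*(s:ℝ) - 4)*(s:ℝ)) ((s:ℝ)*(2*(n:ℝ) - 2*(k:ℝ) - 4 - (s:ℝ)))) v ≤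
      (((2*(n:ℝ) - 2*(k:ℝ) - 4)*((n:ℝ) - (k:ℝ) - 1) + ((k:ℝ) + 1)) / ((n:ℝ) - (k:ℝ) - 1)) *
      (pw n s (s + k - 1) ((3*(s:ℝ) - 4)*(2*(n:ℝ) - 2*(k:ℝ) - 4 - (s:ℝ)))
        ((3*(s:ℝ) - 4)*(s:ℝ)) ((s:ℝ)*(2*(n:ℝ) - 2*(k:ℝ) - 4 - (s:ℝ)))) v := by
  have hSr : (3:ℝ) ≤ (s:ℝ) := by exact_mod_cast hs3
  have hKr : (0:ℝ) ≤ (k:ℝ) := Nat.cast_nonneg k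
  have h1r : 5*(k:ℝ) + 7 ≤ (n:ℝ) := by exact_mod_cast h1
  have h2r : 2*(s:ℝ) + (k:ℝ) ≤ (n:ℝ) := by exact_mod_cast h2
  have hcastA : (↑(s + k - 1) : ℝ) = (s:ℝ) + (k:ℝ) - 1 := by
    have h' : s + k - 1 + 1 = s + k := by omega
    have h'' := congrArg (Nat.cast : ℕ → ℝ) h'
    push_cast at h''
    linarith
  have hTA : (tA:ℝ) = (n:ℝ) - 2*(s:ℝ) - (k:ℝ) + 1 := by
    have h'' := congrArg (Nat.cast : ℕ → ℝ) hA
    rw [Nat.cast_add, Nat.cast_add, hcastA] at h''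
    linarith
  have hD1 : (0:ℝ) < 2*(n:ℝ) - 2*(k:ℝ) - 4 - (s:ℝ) := by linarith
  have hD2 : (0:ℝ) < (n:ℝ) - (k:ℝ) - 1 := by linarith
  intro v
  rw [mulVec_qMat_modelA hA, pw_eval, hcastA, hTA]
  by_cases hv1 : (v:ℕ) < s
  · rw [if_pos hv1, if_pos hv1, div_mul_eq_mul_div, le_div_iff₀ hD2]
    rcases Nat.lt_or_ge n (2*s + k + 1) with hc | hc
    · have hneq : n = 2*s + k := by omega
      have hNe : (n:ℝ) = 2*(s:ℝ) + (k:ℝ) := by exact_mod_cast congrArg (Nat.cast : ℕ → ℝ) hneq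
      have hsk : 2*k + 4 ≤ s := by omega
      have hskr : 2*(k:ℝ) + 4 ≤ (s:ℝ) := by exact_mod_cast hsk
      rw [hNe]
      linarith [st10_cert2 (s:ℝ) (k:ℝ) hKr hskr]
    · have h2r' : 2*(s:ℝ) + (k:ℝ) + 1 ≤ (n:ℝ) := by exact_mod_cast hc
      linarith [st10_cert1 (n:ℝ) (s:ℝ) (k:ℝ) hKr hSr h1r h2r']
  · by_cases hv2 : (v:ℕ) < s + (s + k - 1)
    · rw [if_neg hv1, if_pos hv2, if_neg hv1, if_pos hv2, div_mul_eq_mul_div,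
        le_div_iff₀ hD2]
      linarith [mul_pos (mul_pos (show (0:ℝ) < 3*(s:ℝ)-4 by linarith)
        (show (0:ℝ) < (s:ℝ) by linarith)) (show (0:ℝ) < (k:ℝ)+1 by linarith)]
    · rw [if_neg hv1, if_neg hv2, if_neg hv1, if_neg hv2, div_mul_eq_mul_div,
        le_div_iff₀ hD2]
      linarith [mul_pos (mul_pos (show (0:ℝ) < (k:ℝ)+1 by linarith)
        (show (0:ℝ) < (s:ℝ) by linarith)) hD1]

lemma st10_hEnum (n k tB : ℕ) (h1 : 5 * k + 7 ≤ n) (hB : 2 + (k + 1) + tB = n) :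
    (2*(n:ℝ) - 2*(k:ℝ) - 4)*((n:ℝ) - (k:ℝ) - 1) + ((k:ℝ) + 1)
      < 2*(((n:ℝ) + (tB:ℝ))*1) + ((k:ℝ)+1)*(2*0) + (tB:ℝ)*((2*(tB:ℝ) + 2)*1) := by
  have hKr : (0:ℝ) ≤ (k:ℝ) := Nat.cast_nonneg k
  have hTB : (tB:ℝ) = (n:ℝ) - (k:ℝ) - 3 := by
    have h'' := congrArg (Nat.cast : ℕ → ℝ) hB
    push_cast at h''
    linarith
  rw [hTB]
  nlinarith [hKr]

/-- Lemma: for `n ≥ max{5k+7, 2s+k}`, `0 ≤ k ≤ n` and `s > 2`,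
`q(K_s ∨ ((s+k-1)K_1 ∪ K_{n-2s-k+1})) < q(K_2 ∨ ((k+1)K_1 ∪ K_{n-k-3}))`. -/
theorem stmt_10 (n s k : ℕ) (hn : 1 ≤ n) (hs : 2 ≤ s) (hkn : k ≤ n)
    (h1 : 5 * k + 7 ≤ n) (h2 : 2 * s + k ≤ n) (hs2 : 2 < s) :
    qRad (modelA n s (s + k - 1)) < qRad (modelA n 2 (k + 1)) := by
  have hs3 : 3 ≤ s := hs2
  obtain ⟨tA, hA⟩ : ∃ tA, s + (s + k - 1) + tA = n := ⟨n - (2*s + k - 1), by omega⟩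
  obtain ⟨tB, hB⟩ : ∃ tB, 2 + (k + 1) + tB = n := ⟨n - (k + 3), by omega⟩
  have hSr : (3:ℝ) ≤ (s:ℝ) := by exact_mod_cast hs3
  have hKr : (0:ℝ) ≤ (k:ℝ) := Nat.cast_nonneg k
  have h1r : 5*(k:ℝ) + 7 ≤ (n:ℝ) := by exact_mod_cast h1
  have h2r : 2*(s:ℝ) + (k:ℝ) ≤ (n:ℝ) := by exact_mod_cast h2
  have hcastA : (↑(s + k - 1) : ℝ) = (s:ℝ) + (k:ℝ) - 1 := by
    have h' : s + k - 1 + 1 = s + k := by omega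
    have h'' := congrArg (Nat.cast : ℕ → ℝ) h'
    push_cast at h''
    linarith
  have hTA : (tA:ℝ) = (n:ℝ) - 2*(s:ℝ) - (k:ℝ) + 1 := by
    have h'' := congrArg (Nat.cast : ℕ → ℝ) hA
    rw [Nat.cast_add, Nat.cast_add, hcastA] at h''
    linarith
  have hTB : (tB:ℝ) = (n:ℝ) - (k:ℝ) - 3 := by
    have h'' := congrArg (Nat.cast : ℕ → ℝ) hB
    push_cast at h''
    linarith
  have hD1 : (0:ℝ) < 2*(n:ℝ) - 2*(k:ℝ) - 4 - (s:ℝ) := by linarith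
  have hD2 : (0:ℝ) < (n:ℝ) - (k:ℝ) - 1 := by linarith
  have hE : (0:ℝ) < (2*(n:ℝ) - 2*(k:ℝ) - 4)*((n:ℝ) - (k:ℝ) - 1) + ((k:ℝ) + 1) := by nlinarith
  have hr1 : (0:ℝ) ≤ ((2*(n:ℝ) - 2*(k:ℝ) - 4)*((n:ℝ) - (k:ℝ) - 1) + ((k:ℝ) + 1))
      / ((n:ℝ) - (k:ℝ) - 1) := le_of_lt (div_pos hE hD2)
  have hya : (0:ℝ) < (3*(s:ℝ) - 4)*(2*(n:ℝ) - 2*(k:ℝ) - 4 - (s:ℝ)) := by nlinarith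
  have hyb : (0:ℝ) < (3*(s:ℝ) - 4)*(s:ℝ) := by nlinarith
  have hyc : (0:ℝ) < (s:ℝ)*(2*(n:ℝ) - 2*(k:ℝ) - 4 - (s:ℝ)) := by nlinarith
  have hy : ∀ i, 0 < pw n s (s + k - 1) ((3*(s:ℝ) - 4)*(2*(n:ℝ) - 2*(k:ℝ) - 4 - (s:ℝ)))
      ((3*(s:ℝ) - 4)*(s:ℝ)) ((s:ℝ)*(2*(n:ℝ) - 2*(k:ℝ) - 4 - (s:ℝ))) i := by
    intro i
    rw [pw_eval]
    split
    · exact hya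
    · split
      · exact hyb
      · exact hyc
  have hcomp := st10_hcomp n s k tA hs3 h1 h2 hA
  have up : qRad (modelA n s (s + k - 1)) ≤
      ((2*(n:ℝ) - 2*(k:ℝ) - 4)*((n:ℝ) - (k:ℝ) - 1) + ((k:ℝ) + 1)) / ((n:ℝ) - (k:ℝ) - 1) :=
    qRad_le _ hy hr1 hcomp
  -- lower bound for B
  have hx : pw n 2 (k+1) (1:ℝ) 0 1 ≠ 0 := by
    intro h
    have h0 := congrFun h ⟨0, by omega⟩
    rw [pw_eval] at h0
    norm_num at h0
  have hfun : (qMat (modelA n 2 (k+1))).mulVec (pw n 2 (k+1) (1:ℝ) 0 1)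
      = pw n 2 (k+1) ((n:ℝ) + (tB:ℝ)) 2 (2*(tB:ℝ) + 2) := by
    funext v
    rw [mulVec_qMat_modelA hB, pw_eval]
    by_cases hv1 : (v:ℕ) < 2
    · rw [if_pos hv1, if_pos hv1]
      push_cast
      ring
    · by_cases hv2 : (v:ℕ) < 2 + (k+1)
      · rw [if_neg hv1, if_pos hv2, if_neg hv1, if_pos hv2]
        push_cast
        ring
      · rw [if_neg hv1, if_neg hv2, if_neg hv1, if_neg hv2]
        push_cast
        ring
  have hpt : ∀ (G1 G2 G3 d1 d2 d3 : ℝ) (i : Fin n), pw n 2 (k+1) G1 G2 G3 i *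
      pw n 2 (k+1) d1 d2 d3 i = pw n 2 (k+1) (G1*d1) (G2*d2) (G3*d3) i := by
    intro G1 G2 G3 d1 d2 d3 i
    rw [pw_eval, pw_eval, pw_eval]
    by_cases h1' : (i:ℕ) < 2
    · rw [if_pos h1', if_pos h1', if_pos h1']
    · by_cases h2' : (i:ℕ) < 2 + (k+1)
      · rw [if_neg h1', if_neg h1', if_neg h1', if_pos h2', if_pos h2', if_pos h2']
      · rw [if_neg h1', if_neg h1', if_neg h1', if_neg h2', if_neg h2', if_neg h2']
  have hnum : ∑ i, (qMat (modelA n 2 (k+1))).mulVec (pw n 2 (k+1) (1:ℝ) 0 1) i *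
      pw n 2 (k+1) (1:ℝ) 0 1 i
      = 2*(((n:ℝ) + (tB:ℝ))*1) + ((k:ℝ)+1)*(2*0) + (tB:ℝ)*((2*(tB:ℝ) + 2)*1) := by
    rw [hfun]
    rw [Finset.sum_congr rfl (fun i _ => hpt ((n:ℝ) + (tB:ℝ)) 2 (2*(tB:ℝ) + 2) 1 0 1 i)]
    have := sum_pw hB (((n:ℝ) + (tB:ℝ))*1) ((2:ℝ)*0) ((2*(tB:ℝ) + 2)*1)
    rw [this]
    push_cast
    ring
  have hden : ∑ i, pw n 2 (k+1) (1:ℝ) 0 1 i * pw n 2 (k+1) (1:ℝ) 0 1 i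
      = (n:ℝ) - (k:ℝ) - 1 := by
    rw [Finset.sum_congr rfl (fun i _ => hpt 1 0 1 1 0 1 i)]
    have := sum_pw hB ((1:ℝ)*1) ((0:ℝ)*0) ((1:ℝ)*1)
    rw [this, hTB]
    push_cast
    ring
  have hbdd : BddAbove {t : ℝ | ∃ z : Fin n → ℝ, z ≠ 0 ∧
      (qMat (modelA n 2 (k+1))).mulVec z = t • z} :=
    ⟨2*(n:ℝ), fun t ht => eig_qMat_le _ ht⟩
  have low := rayleigh_le_qRad (modelA n 2 (k+1)) (pw n 2 (k+1) (1:ℝ) 0 1) hx hbdd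
  rw [hnum, hden] at low
  have hEnum := st10_hEnum n k tB h1 hB
  have hfin : ((2*(n:ℝ) - 2*(k:ℝ) - 4)*((n:ℝ) - (k:ℝ) - 1) + ((k:ℝ) + 1)) / ((n:ℝ) - (k:ℝ) - 1)
      < (2*(((n:ℝ) + (tB:ℝ))*1) + ((k:ℝ)+1)*(2*0) + (tB:ℝ)*((2*(tB:ℝ) + 2)*1))
        / ((n:ℝ) - (k:ℝ) - 1) :=
    div_lt_div_of_pos_right hEnum hD2
  exact lt_of_le_of_lt up (lt_of_lt_of_le hfin low)
end
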